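/- arXiv:2603.02280 — 2 statements merged into one kernel-verified Lean document; each statement's English description precedes it below -/
import Mathlib

section
/- Let N ≥ 1, let f : ℕ → ℝ satisfy f[n] ≥ 0 and f[n+1] ≤ f[n] for all n, and let a_A, a_B : ℕ → {−1, +1} be two supervision-polarity sequences. Define cumulative positive counts S_k[n] = Σ_{j=0}^{n} (a_k[j]+1)/2 and temporal positive supervision strengths Q_k[N] = Σ_{n=0}^{N−1} f[N−1−n]·a_k[n] for k ∈ {A, B}. If the two sequences have the same total number of positives, i.e. S_A[N−1] = S_B[N−1], and S_A[n] ≥ S_B[n] for all n = 0, 1, …, N−1, then Q_A[N] ≤ Q_B[N]. -/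
/-- **Temporal imbalance under equal sample counts.**
If two supervision-polarity sequences `aA`, `aB` (values in {−1,+1}) have the same total
number of positives up to step `N−1` and the cumulative positive counts of `A` dominate
those of `B` at every step, then for any nonnegative, monotonically decreasing memory
kernel `f`, the temporal positive supervision strength of `A` at step `N` is at most
that of `B`. -/
theorem temporal_imbalance_le
    (N : ℕ) (hN : 1 ≤ N) (f : ℕ → ℝ)
    (hf_nonneg : ∀ n, 0 ≤ f n) (hf_mono : ∀ n, f (n + 1) ≤ f n)
    (aA aB : ℕ → ℝ)
    (haA : ∀ n, aA n = 1 ∨ aA n = -1) (haB : ∀ n, aB n = 1 ∨ aB n = -1)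
    (SA SB : ℕ → ℝ)
    (hSA : ∀ n, SA n = ∑ j ∈ Finset.range (n + 1), (aA j + 1) / 2)
    (hSB : ∀ n, SB n = ∑ j ∈ Finset.range (n + 1), (aB j + 1) / 2)
    (htotal : SA (N - 1) = SB (N - 1))
    (hdom : ∀ n, n ≤ N - 1 → SB n ≤ SA n) :
    ∑ n ∈ Finset.range N, f (N - 1 - n) * aA n
      ≤ ∑ n ∈ Finset.range N, f (N - 1 - n) * aB n := by
  set g : ℕ → ℝ := fun i => f (N - 1 - i) with hg
  set c : ℕ → ℝ := fun j => (aA j + 1) / 2 - (aB j + 1) / 2 with hc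
  have hC : ∀ n, ∑ j ∈ Finset.range (n + 1), c j = SA n - SB n := by
    intro n
    rw [hSA, hSB, ← Finset.sum_sub_distrib]
  -- summation by parts
  have habel := Finset.sum_range_by_parts g c N
  have hCN : ∑ j ∈ Finset.range N, c j = 0 := by
    have : N = (N - 1) + 1 := (Nat.succ_pred_eq_of_pos hN).symm
    rw [this, hC, htotal, sub_self]
  have hterm : ∀ i ∈ Finset.range (N - 1),
      0 ≤ (g (i + 1) - g i) • (∑ j ∈ Finset.range (i + 1), c j) := by
    intro i hi
    rw [Finset.mem_range] at hi
    apply smul_nonneg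
    · have h1 : N - 1 - i = (N - 1 - (i + 1)) + 1 := by omega
      have := hf_mono (N - 1 - (i + 1))
      simp only [hg]
      rw [h1]
      linarith
    · rw [hC]
      have := hdom i (by omega)
      linarith
  have hsum : 0 ≤ ∑ i ∈ Finset.range (N - 1),
      (g (i + 1) - g i) • (∑ j ∈ Finset.range (i + 1), c j) :=
    Finset.sum_nonneg hterm
  have hgc : ∑ i ∈ Finset.range N, g i • c i ≤ 0 := by
    rw [habel, hCN, smul_zero, zero_sub]
    linarith
  have hexp : ∑ i ∈ Finset.range N, g i • c i
      = (∑ n ∈ Finset.range N, f (N - 1 - n) * aA n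
        - ∑ n ∈ Finset.range N, f (N - 1 - n) * aB n) / 2 := by
    rw [← Finset.sum_sub_distrib, Finset.sum_div]
    apply Finset.sum_congr rfl
    intro i _
    simp only [hg, hc, smul_eq_mul]
    ring
  rw [hexp] at hgc
  linarith
end

section
/- Let N ≥ 1, let f : ℕ → ℝ satisfy f[n] ≥ 0 and f[n+1] < f[n] for all n (strictly decreasing), and let a_A, a_B : ℕ → {−1, +1} with cumulative positive counts S_k[n] = Σ_{j=0}^{n} (a_k[j]+1)/2 and Q_k[N] = Σ_{n=0}^{N−1} f[N−1−n]·a_k[n]. If S_A[N−1] = S_B[N−1], S_A[n] ≥ S_B[n] for all n ≤ N−1, and there exists some n ≤ N−2 with S_A[n] > S_B[n], then Q_A[N] < Q_B[N] strictly. -/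
lemma abel_aux_temporal (g d : ℕ → ℝ) : ∀ M : ℕ,
    ∑ n ∈ Finset.range (M + 1), g n * d n
      = (∑ n ∈ Finset.range M,
          (g n - g (n + 1)) * (∑ j ∈ Finset.range (n + 1), d j))
        + g M * (∑ j ∈ Finset.range (M + 1), d j) := by
  intro M
  induction M with
  | zero => simp
  | succ M ih =>
    rw [Finset.sum_range_succ (f := fun n => g n * d n), ih,
      Finset.sum_range_succ
        (f := fun n => (g n - g (n + 1)) * (∑ j ∈ Finset.range (n + 1), d j)),
      Finset.sum_range_succ (f := d) (n := M + 1)]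
    ring

/-- **Strict temporal imbalance.** With a strictly decreasing nonnegative memory kernel,
equal totals, cumulative dominance, and strict dominance at some step `n ≤ N−2`,
the strength inequality is strict. -/
theorem temporal_imbalance_lt
    (N : ℕ) (hN : 1 ≤ N) (f : ℕ → ℝ)
    (hf_nonneg : ∀ n, 0 ≤ f n) (hf_strict : ∀ n, f (n + 1) < f n)
    (aA aB : ℕ → ℝ)
    (haA : ∀ n, aA n = 1 ∨ aA n = -1) (haB : ∀ n, aB n = 1 ∨ aB n = -1)
    (SA SB : ℕ → ℝ)
    (hSA : ∀ n, SA n = ∑ j ∈ Finset.range (n + 1), (aA j + 1) / 2)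
    (hSB : ∀ n, SB n = ∑ j ∈ Finset.range (n + 1), (aB j + 1) / 2)
    (htotal : SA (N - 1) = SB (N - 1))
    (hdom : ∀ n, n ≤ N - 1 → SB n ≤ SA n)
    (hstrict : ∃ n, n ≤ N - 2 ∧ SB n < SA n) :
    ∑ n ∈ Finset.range N, f (N - 1 - n) * aA n
      < ∑ n ∈ Finset.range N, f (N - 1 - n) * aB n := by
  obtain ⟨m, hm, hmlt⟩ := hstrict
  rcases Nat.lt_or_ge N 2 with h1 | h2
  · -- N = 1 : contradiction
    have hN1 : N = 1 := by omega
    subst hN1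
    have : m = 0 := by omega
    subst this
    simp at htotal
    linarith
  -- N ≥ 2
  set g : ℕ → ℝ := fun n => f (N - 1 - n) with hg
  set d : ℕ → ℝ := fun n => (aA n + 1) / 2 - (aB n + 1) / 2 with hd
  have hT : ∀ n, (∑ j ∈ Finset.range (n + 1), d j) = SA n - SB n := by
    intro n
    rw [hSA, hSB, ← Finset.sum_sub_distrib]
  have key := abel_aux_temporal g d (N - 1)
  have hN1 : N - 1 + 1 = N := by omega
  have hTN := hT (N - 1)
  rw [hN1] at key hTN
  rw [hTN, htotal, sub_self, mul_zero, add_zero] at key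
  have hsum_neg : (∑ n ∈ Finset.range N, g n * d n) < 0 := by
    rw [key]
    have h0 : (0 : ℝ) = ∑ n ∈ Finset.range (N - 1), (0 : ℝ) := by simp
    rw [h0]
    apply Finset.sum_lt_sum
    · intro i hi
      have hiN : i < N - 1 := Finset.mem_range.mp hi
      rw [hT i]
      apply mul_nonpos_of_nonpos_of_nonneg
      · have h1 : N - 1 - i = (N - 2 - i) + 1 := by omega
        have h2 : N - 1 - (i + 1) = N - 2 - i := by omega
        have := hf_strict (N - 2 - i)
        simp only [hg, h1, h2]
        linarith
      · have := hdom i (by omega)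
        linarith
    · refine ⟨m, Finset.mem_range.mpr (by omega), ?_⟩
      rw [hT m]
      apply mul_neg_of_neg_of_pos
      · have h1 : N - 1 - m = (N - 2 - m) + 1 := by omega
        have h2 : N - 1 - (m + 1) = N - 2 - m := by omega
        have := hf_strict (N - 2 - m)
        simp only [hg, h1, h2]
        linarith
      · linarith
  have hexp : (∑ n ∈ Finset.range N, g n * aA n)
      - (∑ n ∈ Finset.range N, g n * aB n)
      = 2 * ∑ n ∈ Finset.range N, g n * d n := by
    rw [Finset.mul_sum, ← Finset.sum_sub_distrib]
    apply Finset.sum_congr rfl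
    intro i _
    simp only [hd]
    ring
  have : (∑ n ∈ Finset.range N, g n * aA n)
      - (∑ n ∈ Finset.range N, g n * aB n) < 0 := by
    rw [hexp]; linarith
  simpa [hg] using by linarith [this]
end
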